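/- Let each resource belong to at most ℓ configurations in a family C^{(k)}, let C be a fixed configuration with |C| ≥ ℓ^{k+3}, and form R_k by keeping each resource independently with probability ℓ^{-k}, where ℓ ≥ 300000 (log n)³. Then with probability at least 1 - 1/n^{10}: ∑_{C'∈C^{(k)}} |C' ∩ C ∩ R_k| ≤ (10/ℓ^k)·(|C| + ∑_{C'∈C^{(k)}} |C' ∩ C|). -/

import Mathlib

open MeasureTheory ProbabilityTheory Real
open scoped ENNReal

section Aux

lemma sum_inter_filter_card' {ρ : Type*} [DecidableEq ρ]
    (𝒞 : Finset (Finset ρ)) (C : Finset ρ) (P : ρ → Prop) [DecidablePred P] :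
    ∑ C' ∈ 𝒞, ((((C' ∩ C).filter P).card : ℝ)) =
      ∑ j ∈ C.filter P, ((𝒞.filter (fun C' => j ∈ C')).card : ℝ) := by
  have h1 : ∀ C' : Finset ρ, (C' ∩ C).filter P = (C.filter P).filter (· ∈ C') := by
    intro C'; ext j
    simp only [Finset.mem_filter, Finset.mem_inter]
    tauto
  calc ∑ C' ∈ 𝒞, ((((C' ∩ C).filter P).card : ℝ))
      = ∑ C' ∈ 𝒞, ∑ j ∈ C.filter P, (if j ∈ C' then (1:ℝ) else 0) := by
        refine Finset.sum_congr rfl fun C' _ => ?_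
        rw [h1, Finset.card_filter]
        push_cast
        rfl
    _ = ∑ j ∈ C.filter P, ∑ C' ∈ 𝒞, (if j ∈ C' then (1:ℝ) else 0) := Finset.sum_comm
    _ = _ := by
        refine Finset.sum_congr rfl fun j _ => ?_
        rw [Finset.card_filter]
        push_cast
        rfl

lemma integral_comp_bool' {Ω : Type*} [MeasureSpace Ω] [IsProbabilityMeasure (ℙ : Measure Ω)]
    (Y : Ω → Bool) (hY : Measurable Y) (g : Bool → ℝ) :
    ∫ ω, g (Y ω) = (ℙ {ω | Y ω = true}).toReal * g true
      + (1 - (ℙ {ω | Y ω = true}).toReal) * g false := by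
  have hA : MeasurableSet {ω | Y ω = true} := hY (MeasurableSet.of_discrete (s := {true}))
  set A := {ω | Y ω = true} with hAdef
  have hfun : (fun ω => g (Y ω)) =
      fun ω => A.indicator (fun _ => g true) ω + Aᶜ.indicator (fun _ => g false) ω := by
    funext ω
    by_cases h : Y ω = true
    · have hω : ω ∈ A := h
      simp [Set.indicator_of_mem hω, Set.indicator_of_notMem (by simpa using hω : ω ∉ Aᶜ), h]
    · have hω : ω ∉ A := h
      simp [Set.indicator_of_notMem hω, Set.indicator_of_mem (by simpa using hω : ω ∈ Aᶜ),
        Bool.not_eq_true _ |>.mp h]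
  rw [hfun, integral_add ((integrable_const _).indicator hA)
    ((integrable_const _).indicator hA.compl),
    integral_indicator_const _ hA, integral_indicator_const _ hA.compl]
  have hcompl : ℙ Aᶜ = 1 - ℙ A := by
    rw [measure_compl hA (measure_ne_top _ _), measure_univ]
  rw [Measure.real, Measure.real, hcompl, ENNReal.toReal_sub_of_le prob_le_one ENNReal.one_ne_top]
  simp [smul_eq_mul]

end Aux

set_option maxHeartbeats 1600000 in
theorem stmt_16 {Ω ρ : Type*} [MeasureSpace Ω] [IsProbabilityMeasure (ℙ : Measure Ω)]
    [DecidableEq ρ]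
    (n : ℕ) (hn : 2 ≤ n) (ℓ : ℝ) (hℓ : 300000 * (Real.log n) ^ 3 ≤ ℓ)
    (k : ℕ) (𝒞 : Finset (Finset ρ)) (C : Finset ρ)
    (hdeg : ∀ j : ρ, ((𝒞.filter (fun C' => j ∈ C')).card : ℝ) ≤ ℓ)
    (hC : ℓ ^ (k + 3) ≤ (C.card : ℝ))
    (Y : ρ → Ω → Bool)
    (hmeas : ∀ j, Measurable (Y j))
    (hindep : iIndepFun Y ℙ)
    (hp : ∀ j, (ℙ {ω | Y j ω = true}).toReal = (1 / ℓ) ^ k) :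
    ENNReal.ofReal (1 - 1 / (n : ℝ) ^ 10) ≤
      ℙ {ω | ∑ C' ∈ 𝒞, (((C' ∩ C).filter (fun j => Y j ω = true)).card : ℝ) ≤
        (10 / ℓ ^ k) * ((C.card : ℝ) + ∑ C' ∈ 𝒞, ((C' ∩ C).card : ℝ))} := by
  classical
  -- basic numerics
  have hL2 : (0.6931 : ℝ) ≤ Real.log n := by
    have h1 : Real.log 2 ≤ Real.log n :=
      Real.log_le_log (by norm_num) (by exact_mod_cast hn)
    have := Real.log_two_gt_d9
    linarith
  have hℓbig : (90000 : ℝ) ≤ ℓ := by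
    have h3 : (0.6931:ℝ)^3 ≤ (Real.log n)^3 := pow_le_pow_left₀ (by norm_num) hL2 3
    nlinarith [h3, hℓ]
  have hℓpos : (0:ℝ) < ℓ := by linarith
  set p : ℝ := (1 / ℓ) ^ k with hpdef
  have hp0 : 0 < p := by positivity
  have hp1 : p ≤ 1 := pow_le_one₀ (by positivity) (by rw [div_le_one hℓpos]; linarith)
  set a : ρ → ℕ := fun j => (𝒞.filter (fun C' => j ∈ C')).card with hadef
  have hale : ∀ j, (a j : ℝ) ≤ ℓ := hdeg
  set S : ℝ := ∑ j ∈ C, (a j : ℝ) with hSdef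
  have hS0 : 0 ≤ S := Finset.sum_nonneg fun j _ => by positivity
  set T : ℝ := (10 / ℓ ^ k) * ((C.card : ℝ) + S) with hTdef
  set Xf : ρ → Ω → ℝ := fun j ω => (a j : ℝ) * (if Y j ω = true then 1 else 0) with hXfdef
  have hXfmeas : ∀ j, Measurable (Xf j) := by
    intro j
    exact (Measurable.of_discrete (f := fun b : Bool => (a j : ℝ) * (if b = true then 1 else 0))).comp
      (hmeas j)
  set X : Ω → ℝ := fun ω => ∑ j ∈ C, Xf j ω with hXdef
  have hXmeas : Measurable X := Finset.measurable_sum _ fun j _ => hXfmeas j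
  -- rewrite the event
  have hident : ∀ ω, ∑ C' ∈ 𝒞, (((C' ∩ C).filter (fun j => Y j ω = true)).card : ℝ) = X ω := by
    intro ω
    rw [sum_inter_filter_card' 𝒞 C (fun j => Y j ω = true)]
    rw [hXdef]
    simp only [hXfdef]
    rw [Finset.sum_filter]
    refine Finset.sum_congr rfl fun j _ => ?_
    by_cases h : Y j ω = true <;> simp [h, hadef]
  have hident2 : ∑ C' ∈ 𝒞, ((C' ∩ C).card : ℝ) = S := by
    have := sum_inter_filter_card' 𝒞 C (fun _ => True)
    simpa [hSdef, hadef] using this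
  have hsetEq : {ω | ∑ C' ∈ 𝒞, (((C' ∩ C).filter (fun j => Y j ω = true)).card : ℝ) ≤
        (10 / ℓ ^ k) * ((C.card : ℝ) + ∑ C' ∈ 𝒞, ((C' ∩ C).card : ℝ))} = {ω | X ω ≤ T} := by
    ext ω
    simp only [Set.mem_setOf_eq, hident ω, hident2, hTdef]
  rw [hsetEq]
  -- probability of single coordinate
  have hptrue : ∀ j, (ℙ {ω | Y j ω = true}).toReal = p := hp
  -- independence of the Xf
  have hXindep : iIndepFun Xf ℙ := by
    have := hindep.comp (fun j (b : Bool) => (a j : ℝ) * (if b = true then 1 else 0))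
      (fun j => Measurable.of_discrete)
    exact this
  -- mgf of each coordinate
  set t : ℝ := 2 / ℓ with htdef
  have ht0 : 0 ≤ t := by positivity
  have hmgfj : ∀ j, mgf (Xf j) ℙ t = p * Real.exp (t * (a j : ℝ)) + (1 - p) := by
    intro j
    have : (fun ω => Real.exp (t * Xf j ω)) =
        fun ω => (fun b : Bool => Real.exp (t * ((a j : ℝ) * (if b = true then 1 else 0)))) (Y j ω) := by
      funext ω; rfl
    rw [mgf, this, integral_comp_bool' (Y j) (hmeas j)
      (fun b : Bool => Real.exp (t * ((a j : ℝ) * (if b = true then 1 else 0)))), hptrue j]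
    simp [mul_comm]
  -- exp 2 bound
  have hexp2 : Real.exp 2 ≤ 8 := by
    have h1 : Real.exp 1 < 2.7182818286 := Real.exp_one_lt_d9
    have h2 : Real.exp 2 = Real.exp 1 * Real.exp 1 := by
      rw [← Real.exp_add]; norm_num
    nlinarith [Real.exp_pos 1]
  -- bound on each mgf
  have hmgfj_le : ∀ j ∈ C, mgf (Xf j) ℙ t ≤ Real.exp (7 * p * ((a j : ℝ) / ℓ)) := by
    intro j _
    set s : ℝ := (a j : ℝ) / ℓ with hsdef
    have hs0 : 0 ≤ s := by positivity
    have hs1 : s ≤ 1 := by rw [div_le_one hℓpos]; exact hale j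
    have hconv : Real.exp (2 * s) ≤ 1 + s * (Real.exp 2 - 1) := by
      have h := convexOn_exp.2 (Set.mem_univ (0:ℝ)) (Set.mem_univ (2:ℝ))
        (by linarith : (0:ℝ) ≤ 1 - s) hs0 (by ring)
      simp only [smul_eq_mul, mul_zero, zero_add, Real.exp_zero] at h
      rw [mul_comm]
      nlinarith [h]
    have hts : t * (a j : ℝ) = 2 * s := by
      rw [htdef, hsdef]; field_simp
    rw [hmgfj j, hts]
    have h1 : p * Real.exp (2 * s) + (1 - p) ≤ 1 + p * s * (Real.exp 2 - 1) := by
      nlinarith [hp0.le]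
    have h2 : 1 + p * s * (Real.exp 2 - 1) ≤ 1 + 7 * p * s := by
      nlinarith [mul_nonneg hp0.le hs0]
    have h3 : 1 + 7 * p * s ≤ Real.exp (7 * p * s) := by
      have := Real.add_one_le_exp (7 * p * s)
      linarith
    linarith
  -- mgf of the sum
  have hXsum : X = ∑ j ∈ C, Xf j := by
    funext ω; rw [hXdef]; simp [Finset.sum_apply]
  have hmgfX : mgf X ℙ t ≤ Real.exp (7 * p * S / ℓ) := by
    rw [hXsum, hXindep.mgf_sum hXfmeas C]
    calc ∏ j ∈ C, mgf (Xf j) ℙ t ≤ ∏ j ∈ C, Real.exp (7 * p * ((a j : ℝ) / ℓ)) :=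
          Finset.prod_le_prod (fun j _ => mgf_nonneg) hmgfj_le
      _ = Real.exp (∑ j ∈ C, 7 * p * ((a j : ℝ) / ℓ)) := (Real.exp_sum _ _).symm
      _ = Real.exp (7 * p * S / ℓ) := by
          congr 1
          rw [hSdef, Finset.mul_sum, Finset.sum_div]
          refine Finset.sum_congr rfl fun j _ => ?_
          ring
  -- integrability
  have hXle : ∀ ω, X ω ≤ S := by
    intro ω
    refine Finset.sum_le_sum fun j _ => ?_
    rw [hXfdef]
    by_cases h : Y j ω = true <;> simp [h] <;> positivity
  have hint : Integrable (fun ω => Real.exp (t * X ω)) ℙ := by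
    refine Integrable.mono' (integrable_const (Real.exp (t * S)))
      ((hXmeas.const_mul t).exp.aestronglyMeasurable) ?_
    filter_upwards with ω
    rw [Real.norm_eq_abs, abs_of_pos (Real.exp_pos _)]
    exact Real.exp_le_exp.mpr (mul_le_mul_of_nonneg_left (hXle ω) ht0)
  -- Chernoff
  have hchern : (ℙ {ω | T ≤ X ω}).toReal ≤ Real.exp (-t * T) * mgf X ℙ t :=
    measure_ge_le_exp_mul_mgf T ht0 hint
  -- p-cardinality bound
  have hpC : ℓ ^ 3 ≤ p * (C.card : ℝ) := by
    have h1 : p * ℓ ^ (k+3) ≤ p * (C.card : ℝ) := by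
      exact mul_le_mul_of_nonneg_left hC hp0.le
    have h2 : p * ℓ ^ (k+3) = ℓ ^ 3 := by
      rw [hpdef, div_pow, one_pow, pow_add]
      field_simp
    linarith
  -- exponent bound
  have hexpbound : -t * T + 7 * p * S / ℓ ≤ -13 * ℓ ^ 2 := by
    have h10 : (10 : ℝ) / ℓ ^ k = 10 * p := by
      rw [hpdef, div_pow, one_pow]; ring
    have hTe : t * T = 20 * p * ((C.card : ℝ) + S) / ℓ := by
      rw [hTdef, htdef, h10]; ring
    have hcard0 : (0:ℝ) ≤ (C.card : ℝ) := by positivity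
    have key : -t * T + 7 * p * S / ℓ ≤ -13 * (p * (C.card : ℝ)) / ℓ := by
      rw [neg_mul, hTe]
      have hnum : -(20 * p * ((C.card : ℝ) + S)) + 7 * p * S ≤ -13 * (p * (C.card : ℝ)) := by
        nlinarith [mul_nonneg hp0.le hS0, mul_nonneg hp0.le hcard0]
      calc -(20 * p * ((C.card : ℝ) + S) / ℓ) + 7 * p * S / ℓ
          = (-(20 * p * ((C.card : ℝ) + S)) + 7 * p * S) / ℓ := by ring
        _ ≤ -13 * (p * (C.card : ℝ)) / ℓ := by
            exact div_le_div_of_nonneg_right hnum hℓpos.le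
    have h2 : -13 * (p * (C.card : ℝ)) / ℓ ≤ -13 * ℓ ^ 2 := by
      rw [div_le_iff₀ hℓpos]
      nlinarith [hpC]
    linarith
  -- final tail bound
  have htail : (ℙ {ω | T ≤ X ω}).toReal ≤ 1 / (n : ℝ) ^ 10 := by
    have h1 : Real.exp (-t * T) * mgf X ℙ t ≤ Real.exp (-t * T + 7 * p * S / ℓ) := by
      rw [Real.exp_add]
      exact mul_le_mul_of_nonneg_left hmgfX (Real.exp_pos _).le
    have h2 : Real.exp (-t * T + 7 * p * S / ℓ) ≤ Real.exp (-13 * ℓ ^ 2) :=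
      Real.exp_le_exp.mpr hexpbound
    have hn0 : (0:ℝ) < (n : ℝ) ^ 10 := by
      have : (0:ℝ) < (n:ℝ) := by exact_mod_cast (by omega : 0 < n)
      positivity
    have h3 : Real.exp (-13 * ℓ ^ 2) ≤ 1 / (n : ℝ) ^ 10 := by
      rw [← Real.exp_log (by positivity : (0:ℝ) < 1 / (n:ℝ) ^ 10)]
      apply Real.exp_le_exp.mpr
      rw [one_div, Real.log_inv, Real.log_pow]
      have hLn : Real.log n ≤ ℓ ^ 2 / 10 := by
        have h5 : (0.6931:ℝ)^5 ≤ (Real.log n)^5 :=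
          pow_le_pow_left₀ (by norm_num) hL2 5
        nlinarith [sq_nonneg (Real.log n), hL2, hℓ,
          mul_pos (lt_of_lt_of_le (by norm_num : (0:ℝ) < 0.6931) hL2)
            (lt_of_lt_of_le (by norm_num : (0:ℝ) < 0.6931^5) h5)]
      push_cast
      nlinarith [hLn, sq_nonneg ℓ]
    calc (ℙ {ω | T ≤ X ω}).toReal ≤ Real.exp (-t * T) * mgf X ℙ t := hchern
      _ ≤ _ := le_trans h1 (le_trans h2 h3)
  -- convert to ENNReal
  have hBle : ℙ {ω | T ≤ X ω} ≤ ENNReal.ofReal (1 / (n : ℝ) ^ 10) := by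
    rw [← ENNReal.ofReal_toReal (measure_ne_top ℙ {ω | T ≤ X ω})]
    exact ENNReal.ofReal_le_ofReal htail
  have hAmeas : MeasurableSet {ω | X ω ≤ T} := measurableSet_le hXmeas measurable_const
  have hcompl_sub : {ω | X ω ≤ T}ᶜ ⊆ {ω | T ≤ X ω} := by
    intro ω hω
    simp only [Set.mem_compl_iff, Set.mem_setOf_eq, not_le] at hω
    exact le_of_lt hω
  have hx0 : (0:ℝ) ≤ 1 / (n : ℝ) ^ 10 := by positivity
  have hx1 : 1 / (n : ℝ) ^ 10 ≤ 1 := by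
    have : (1:ℝ) ≤ (n:ℝ) ^ 10 := one_le_pow₀ (by exact_mod_cast hn.trans' (by norm_num))
    rw [div_le_one (by linarith)]
    exact this
  have hsum1 : ℙ {ω | X ω ≤ T} + ℙ {ω | X ω ≤ T}ᶜ = 1 := by
    rw [measure_add_measure_compl hAmeas, measure_univ]
  have hkey : (1 : ENNReal) ≤ ℙ {ω | X ω ≤ T} + ENNReal.ofReal (1 / (n : ℝ) ^ 10) := by
    rw [← hsum1]
    exact add_le_add le_rfl (le_trans (measure_mono hcompl_sub) hBle)
  calc ENNReal.ofReal (1 - 1 / (n : ℝ) ^ 10)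
      ≤ 1 - ENNReal.ofReal (1 / (n : ℝ) ^ 10) := by
        rw [← ENNReal.ofReal_one, ← ENNReal.ofReal_sub _ hx0]
    _ ≤ ℙ {ω | X ω ≤ T} := by
        rw [tsub_le_iff_right]
        exact hkey.trans (by rw [add_comm])
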